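/- Let X and Y be nonempty finite sets, let μ and ν be normalized capacities on X and Y respectively, and let f : X × Y → ℝ. Then for every π ∈ Π_Ch(μ,ν), the Choquet integral of f with respect to π is less than or equal to the Choquet integral of f with respect to π^*, where π^*(N) = min(μ(N_X), ν(N_Y)). In particular, the maximum of the Choquet integral of f over Π_Ch(μ,ν) is attained at π^*. -/

import Mathlib

open Finset MeasureTheory

/-- A capacity on a finite set `Z`: a monotone set function vanishing on `∅`. -/
def IsCapacity {Z : Type*} (γ : Finset Z → ℝ) : Prop :=
  γ ∅ = 0 ∧ ∀ A B : Finset Z, A ⊆ B → γ A ≤ γ B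

/-- A normalized capacity: a capacity with `γ(Z) = 1`. -/
def IsNormalizedCapacity {Z : Type*} [Fintype Z] (γ : Finset Z → ℝ) : Prop :=
  IsCapacity γ ∧ γ Finset.univ = 1

/-- Membership of a capacity `π` on `X × Y` in `Π_Ch(μ, ν)`:
`π` is a capacity whose marginals are `μ` and `ν`. -/
def InPiCh {X Y : Type*} [Fintype X] [Fintype Y]
    (μ : Finset X → ℝ) (ν : Finset Y → ℝ) (π : Finset (X × Y) → ℝ) : Prop :=
  IsCapacity π ∧ (∀ A : Finset X, π (A ×ˢ Finset.univ) = μ A) ∧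
    (∀ B : Finset Y, π (Finset.univ ×ˢ B) = ν B)

/-- Projection of `N ⊆ X × Y` onto `X`. -/
def projX {X Y : Type*} [DecidableEq X] (N : Finset (X × Y)) : Finset X :=
  N.image Prod.fst

/-- Projection of `N ⊆ X × Y` onto `Y`. -/
def projY {X Y : Type*} [DecidableEq Y] (N : Finset (X × Y)) : Finset Y :=
  N.image Prod.snd

/-- Full-fiber projection of `N ⊆ X × Y` onto `X`: points `x` with `(x, y) ∈ N` for all `y`. -/
def tprojX {X Y : Type*} [Fintype X] [Fintype Y] [DecidableEq X] [DecidableEq Y]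
    (N : Finset (X × Y)) : Finset X :=
  Finset.univ.filter (fun x => ∀ y : Y, (x, y) ∈ N)

/-- Full-fiber projection of `N ⊆ X × Y` onto `Y`: points `y` with `(x, y) ∈ N` for all `x`. -/
def tprojY {X Y : Type*} [Fintype X] [Fintype Y] [DecidableEq X] [DecidableEq Y]
    (N : Finset (X × Y)) : Finset Y :=
  Finset.univ.filter (fun y => ∀ x : X, (x, y) ∈ N)

/-- The Choquet integral of `f` with respect to a (normalized) capacity `γ` on a finite set. -/
noncomputable def choquet {Z : Type*} [Fintype Z] (γ : Finset Z → ℝ) (f : Z → ℝ) : ℝ :=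
  (∫ t in Set.Ioi (0 : ℝ), γ (Finset.univ.filter (fun z => t ≤ f z))) +
    ∫ t in Set.Iio (0 : ℝ), (γ (Finset.univ.filter (fun z => t ≤ f z)) - 1)

section Aux

open Set

lemma choquet_integrable {Z : Type*} [Fintype Z] [Nonempty Z] {γ : Finset Z → ℝ}
    (hγ : IsNormalizedCapacity γ) (f : Z → ℝ) :
    IntegrableOn (fun t => γ (Finset.univ.filter (fun z => t ≤ f z))) (Set.Ioi (0:ℝ)) ∧
      IntegrableOn (fun t => γ (Finset.univ.filter (fun z => t ≤ f z)) - 1) (Set.Iio (0:ℝ)) := by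
  obtain ⟨⟨h0, hmono⟩, h1⟩ := hγ
  set g : ℝ → ℝ := fun t => γ (Finset.univ.filter (fun z => t ≤ f z)) with hg
  have ganti : Antitone g := by
    intro s t hst
    apply hmono
    intro z hz
    simp only [Finset.mem_filter] at hz ⊢
    exact ⟨hz.1, le_trans hst hz.2⟩
  have hne : (Finset.univ : Finset Z).Nonempty := Finset.univ_nonempty
  set M : ℝ := max ((Finset.univ : Finset Z).sup' hne f) 0 with hM
  set m : ℝ := min ((Finset.univ : Finset Z).inf' hne f) 0 with hm
  have hgM : ∀ t ∈ Set.Ioi M, g t = 0 := by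
    intro t ht
    have : (Finset.univ.filter (fun z => t ≤ f z)) = ∅ := by
      apply Finset.eq_empty_of_forall_notMem
      intro z hz
      simp only [Finset.mem_filter] at hz
      have : f z ≤ M := le_trans (Finset.le_sup' f (Finset.mem_univ z)) (le_max_left _ _)
      exact absurd (le_trans hz.2 this) (not_le.2 ht)
    simp [g, this, h0]
  have hgm : ∀ t ∈ Set.Iio m, g t - 1 = 0 := by
    intro t ht
    have : (Finset.univ.filter (fun z => t ≤ f z)) = Finset.univ := by
      apply Finset.filter_true_of_mem
      intro z _
      have : m ≤ f z := le_trans (min_le_left _ _) (Finset.inf'_le f (Finset.mem_univ z))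
      exact le_of_lt (lt_of_lt_of_le ht this)
    simp [g, this, h1]
  constructor
  · have h1' : IntegrableOn g (Set.Ioc 0 M) := by
      refine IntegrableOn.mono_set ?_ Set.Ioc_subset_Icc_self
      exact AntitoneOn.integrableOn_isCompact isCompact_Icc (ganti.antitoneOn _)
    have h2' : IntegrableOn g (Set.Ioi M) := by
      refine (integrableOn_congr_fun (g := fun _ => (0:ℝ)) ?_ measurableSet_Ioi).2
        integrableOn_zero
      · intro t ht; exact hgM t ht
    have := h1'.union h2'
    refine this.mono_set ?_
    intro t ht
    rcases le_or_gt t M with h | h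
    · exact Or.inl ⟨ht, h⟩
    · exact Or.inr h
  · have h1' : IntegrableOn (fun t => g t - 1) (Set.Ico m 0) := by
      refine IntegrableOn.mono_set ?_ Set.Ico_subset_Icc_self
      have : AntitoneOn (fun t => g t - 1) (Set.Icc m 0) :=
        fun a _ b _ hab => by simpa using ganti hab
      exact AntitoneOn.integrableOn_isCompact isCompact_Icc this
    have h2' : IntegrableOn (fun t => g t - 1) (Set.Iio m) := by
      refine (integrableOn_congr_fun (g := fun _ => (0:ℝ)) ?_ measurableSet_Iio).2
        integrableOn_zero
      · intro t ht; exact hgm t ht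
    have := h2'.union h1'
    refine this.mono_set ?_
    intro t ht
    rcases lt_or_ge t m with h | h
    · exact Or.inl h
    · exact Or.inr ⟨h, ht⟩

lemma choquet_mono {Z : Type*} [Fintype Z] [Nonempty Z] {γ₁ γ₂ : Finset Z → ℝ}
    (h₁ : IsNormalizedCapacity γ₁) (h₂ : IsNormalizedCapacity γ₂)
    (hle : ∀ N, γ₁ N ≤ γ₂ N) (f : Z → ℝ) : choquet γ₁ f ≤ choquet γ₂ f := by
  obtain ⟨i1, i1'⟩ := choquet_integrable h₁ f
  obtain ⟨i2, i2'⟩ := choquet_integrable h₂ f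
  unfold choquet
  apply add_le_add
  · exact setIntegral_mono_on i1 i2 measurableSet_Ioi (fun t _ => hle _)
  · exact setIntegral_mono_on i1' i2' measurableSet_Iio (fun t _ => by
      simpa using hle (Finset.univ.filter (fun z => t ≤ f z)))

end Aux

/-- the Choquet integral of `f` with respect to `π^*` is an upper bound for the
Choquet integral of `f` with respect to any `π ∈ Π_Ch(μ, ν)`; since `π^* ∈ Π_Ch(μ, ν)`,
the maximum of the Choquet integral over `Π_Ch(μ, ν)` is attained at `π^*`. -/
theorem choquet_max_at_piUpper {X Y : Type*} [Fintype X] [Fintype Y] [Nonempty X] [Nonempty Y]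
    [DecidableEq X] [DecidableEq Y]
    (μ : Finset X → ℝ) (ν : Finset Y → ℝ)
    (hμ : IsNormalizedCapacity μ) (hν : IsNormalizedCapacity ν) (f : X × Y → ℝ) :
    InPiCh μ ν (fun N : Finset (X × Y) => min (μ (projX N)) (ν (projY N))) ∧
      ∀ π : Finset (X × Y) → ℝ, InPiCh μ ν π →
        choquet π f ≤
          choquet (fun N : Finset (X × Y) => min (μ (projX N)) (ν (projY N))) f := by
  obtain ⟨⟨hμ0, hμm⟩, hμ1⟩ := hμ
  obtain ⟨⟨hν0, hνm⟩, hν1⟩ := hν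
  have hstar_cap : IsCapacity (fun N : Finset (X × Y) => min (μ (projX N)) (ν (projY N))) := by
    constructor
    · simp [projX, projY, hμ0, hν0]
    · intro A B hAB
      exact min_le_min (hμm _ _ (Finset.image_subset_image hAB))
        (hνm _ _ (Finset.image_subset_image hAB))
  have hmargX : ∀ A : Finset X,
      min (μ (projX (A ×ˢ (Finset.univ : Finset Y)))) (ν (projY (A ×ˢ Finset.univ))) = μ A := by
    intro A
    rcases A.eq_empty_or_nonempty with rfl | hA
    · simp [projX, projY, hμ0, hν0]
    · have hx : projX (A ×ˢ (Finset.univ : Finset Y)) = A := by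
        ext x
        simp only [projX, Finset.mem_image, Finset.mem_product, Finset.mem_univ, and_true,
          Prod.exists, exists_and_right, exists_eq_right]
        exact ⟨fun ⟨_, h⟩ => h, fun h => ⟨Classical.arbitrary Y, h⟩⟩
      have hy : projY (A ×ˢ (Finset.univ : Finset Y)) = Finset.univ := by
        obtain ⟨a, ha⟩ := hA
        ext y
        simp only [projY, Finset.mem_image, Finset.mem_product, Finset.mem_univ, iff_true,
          Prod.exists]
        exact ⟨a, y, by simp [ha]⟩
      rw [hx, hy, hν1]
      exact min_eq_left (le_trans (hμm _ _ (Finset.subset_univ A)) (le_of_eq hμ1))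
  have hmargY : ∀ B : Finset Y,
      min (μ (projX ((Finset.univ : Finset X) ×ˢ B))) (ν (projY ((Finset.univ : Finset X) ×ˢ B))) = ν B := by
    intro B
    rcases B.eq_empty_or_nonempty with rfl | hB
    · simp [projX, projY, hμ0, hν0]
    · have hy : projY ((Finset.univ : Finset X) ×ˢ B) = B := by
        ext y
        simp only [projY, Finset.mem_image, Finset.mem_product, Finset.mem_univ, true_and,
          Prod.exists, exists_eq_right]
        exact ⟨fun ⟨_, h⟩ => h, fun h => ⟨Classical.arbitrary X, h⟩⟩
      have hx : projX ((Finset.univ : Finset X) ×ˢ B) = Finset.univ := by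
        obtain ⟨b, hb⟩ := hB
        ext x
        simp only [projX, Finset.mem_image, Finset.mem_product, Finset.mem_univ, iff_true,
          Prod.exists]
        exact ⟨x, b, by simp [hb]⟩
      rw [hx, hy, hμ1]
      exact min_eq_right (le_trans (hνm _ _ (Finset.subset_univ B)) (le_of_eq hν1))
  have hstar : InPiCh μ ν (fun N : Finset (X × Y) => min (μ (projX N)) (ν (projY N))) :=
    ⟨hstar_cap, hmargX, hmargY⟩
  refine ⟨hstar, ?_⟩
  intro π hπ
  obtain ⟨⟨hπ0, hπm⟩, hπX, hπY⟩ := hπ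
  have hπ1 : π Finset.univ = 1 := by
    rw [← Finset.univ_product_univ, hπX, hμ1]
  have hstar1 : min (μ (projX (Finset.univ : Finset (X × Y))))
      (ν (projY (Finset.univ : Finset (X × Y)))) = 1 := by
    rw [← Finset.univ_product_univ, hmargX, hμ1]
  have hle : ∀ N : Finset (X × Y), π N ≤ min (μ (projX N)) (ν (projY N)) := by
    intro N
    refine le_min ?_ ?_
    · rw [← hπX (projX N)]
      apply hπm
      intro p hp
      simp only [Finset.mem_product, Finset.mem_univ, and_true]
      exact Finset.mem_image_of_mem Prod.fst hp
    · rw [← hπY (projY N)]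
      apply hπm
      intro p hp
      simp only [Finset.mem_product, Finset.mem_univ, true_and]
      exact Finset.mem_image_of_mem Prod.snd hp
  exact choquet_mono ⟨⟨hπ0, hπm⟩, hπ1⟩ ⟨hstar_cap, hstar1⟩ hle f
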